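/- Let n ≥ 1, let μ : ℝⁿ → ℝ be smooth with μ(x) > 0 for all x, and let Φ : ℝⁿ → ℝ be smooth with compact support. Then ∫_{ℝⁿ} μ(x)^{−1}(ΔΦ(x))² dx = ∫_{ℝⁿ} { Hess(μ^{−1})(x)(∇Φ(x), ∇Φ(x)) − Δ(μ^{−1})(x)·‖∇Φ(x)‖² + μ(x)^{−1}·‖Hess Φ(x)‖² } dx. -/

import Mathlib

open MeasureTheory Filter Set
open scoped InnerProductSpace Topology

/-- Partial derivative `∂ⱼ f x` on Euclidean space. -/
noncomputable def pder (n : ℕ) (j : Fin n) (f : EuclideanSpace ℝ (Fin n) → ℝ)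
    (x : EuclideanSpace ℝ (Fin n)) : ℝ :=
  fderiv ℝ f x (EuclideanSpace.single j 1)

/-- Divergence `∇·v` of a vector field on Euclidean space. -/
noncomputable def divg (n : ℕ) (v : EuclideanSpace ℝ (Fin n) → EuclideanSpace ℝ (Fin n))
    (x : EuclideanSpace ℝ (Fin n)) : ℝ :=
  ∑ j, pder n j (fun y => v y j) x

/-- Laplacian `Δf = ∑ⱼ ∂ⱼ∂ⱼ f`. -/
noncomputable def lapl (n : ℕ) (f : EuclideanSpace ℝ (Fin n) → ℝ)
    (x : EuclideanSpace ℝ (Fin n)) : ℝ :=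
  ∑ j, pder n j (fun y => pder n j f y) x

/-- Entry `(i,j)` of the Hessian matrix of `f`. -/
noncomputable def hessij (n : ℕ) (f : EuclideanSpace ℝ (Fin n) → ℝ)
    (x : EuclideanSpace ℝ (Fin n)) (i j : Fin n) : ℝ :=
  pder n i (fun y => pder n j f y) x

/-- Hessian quadratic form `Hess f (u,u) = ∑ᵢⱼ (∂ᵢ∂ⱼf) uᵢ uⱼ`. -/
noncomputable def hessQF (n : ℕ) (f : EuclideanSpace ℝ (Fin n) → ℝ)
    (x u : EuclideanSpace ℝ (Fin n)) : ℝ :=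
  ∑ i, ∑ j, hessij n f x i j * u i * u j

/-- Squared Frobenius norm of the Hessian: `‖Hess f‖² = ∑ᵢⱼ (∂ᵢ∂ⱼf)²`. -/
noncomputable def hessFrob (n : ℕ) (f : EuclideanSpace ℝ (Fin n) → ℝ)
    (x : EuclideanSpace ℝ (Fin n)) : ℝ :=
  ∑ i, ∑ j, (hessij n f x i j)^2

section Helpers

variable {n : ℕ}

lemma hle1 : (1 : WithTop ℕ∞) ≤ ((⊤ : ℕ∞) : WithTop ℕ∞) := by
  rw [show ((1:WithTop ℕ∞)) = ((1:ℕ∞) : WithTop ℕ∞) by norm_cast]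
  exact WithTop.coe_le_coe.2 le_top

lemma hleT : ((⊤ : ℕ∞) : WithTop ℕ∞) + 1 ≤ ((⊤ : ℕ∞) : WithTop ℕ∞) := by
  rw [show ((1:WithTop ℕ∞)) = ((1:ℕ∞) : WithTop ℕ∞) by norm_cast, ← WithTop.coe_add]
  exact WithTop.coe_le_coe.2 le_top

lemma hle2 : (2 : WithTop ℕ∞) ≤ ((⊤ : ℕ∞) : WithTop ℕ∞) := by
  rw [show ((2:WithTop ℕ∞)) = ((2:ℕ∞) : WithTop ℕ∞) by norm_cast]
  exact WithTop.coe_le_coe.2 le_top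

lemma ContDiff.pder' {f : EuclideanSpace ℝ (Fin n) → ℝ} (hf : ContDiff ℝ (⊤ : ℕ∞) f)
    (j : Fin n) : ContDiff ℝ (⊤ : ℕ∞) (pder n j f) :=
  (hf.fderiv_right (m := (⊤ : ℕ∞)) hleT).clm_apply contDiff_const

lemma ContDiff.pdiff {f : EuclideanSpace ℝ (Fin n) → ℝ} (hf : ContDiff ℝ (⊤ : ℕ∞) f)
    {x : EuclideanSpace ℝ (Fin n)} : DifferentiableAt ℝ f x :=
  (hf.differentiable (by simp)).differentiableAt

lemma pder_mul {f g : EuclideanSpace ℝ (Fin n) → ℝ} {x : EuclideanSpace ℝ (Fin n)}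
    (hf : DifferentiableAt ℝ f x) (hg : DifferentiableAt ℝ g x) (j : Fin n) :
    pder n j (fun y => f y * g y) x = pder n j f x * g x + f x * pder n j g x := by
  simp only [pder, fderiv_fun_mul hf hg, ContinuousLinearMap.add_apply,
    ContinuousLinearMap.smul_apply, smul_eq_mul]
  ring

lemma pder_add {f g : EuclideanSpace ℝ (Fin n) → ℝ} {x : EuclideanSpace ℝ (Fin n)}
    (hf : DifferentiableAt ℝ f x) (hg : DifferentiableAt ℝ g x) (j : Fin n) :
    pder n j (fun y => f y + g y) x = pder n j f x + pder n j g x := by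
  simp [pder, fderiv_fun_add hf hg]

lemma pder_sub {f g : EuclideanSpace ℝ (Fin n) → ℝ} {x : EuclideanSpace ℝ (Fin n)}
    (hf : DifferentiableAt ℝ f x) (hg : DifferentiableAt ℝ g x) (j : Fin n) :
    pder n j (fun y => f y - g y) x = pder n j f x - pder n j g x := by
  simp [pder, fderiv_fun_sub hf hg]

lemma pder_sum {ι : Type*} (s : Finset ι) {F : ι → EuclideanSpace ℝ (Fin n) → ℝ}
    {x : EuclideanSpace ℝ (Fin n)} (h : ∀ i ∈ s, DifferentiableAt ℝ (F i) x) (j : Fin n) :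
    pder n j (fun y => ∑ i ∈ s, F i y) x = ∑ i ∈ s, pder n j (F i) x := by
  simp only [pder]
  rw [fderiv_fun_sum h]
  simp

lemma pder_comm {f : EuclideanSpace ℝ (Fin n) → ℝ} (hf : ContDiff ℝ (⊤ : ℕ∞) f)
    (i j : Fin n) (x : EuclideanSpace ℝ (Fin n)) :
    pder n i (pder n j f) x = pder n j (pder n i f) x := by
  have hsym : IsSymmSndFDerivAt ℝ f x := hf.contDiffAt.isSymmSndFDerivAt (by simpa using hle2)
  have key : ∀ (a b : Fin n), pder n a (pder n b f) x
      = fderiv ℝ (fderiv ℝ f) x (EuclideanSpace.single a 1) (EuclideanSpace.single b 1) := by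
    intro a b
    have hdf : DifferentiableAt ℝ (fderiv ℝ f) x :=
      ((hf.fderiv_right (m := (⊤:ℕ∞)) hleT).differentiable (by simp)).differentiableAt
    have h0 : pder n a (pder n b f) x
        = fderiv ℝ (fun y => (fderiv ℝ f y) (EuclideanSpace.single b 1)) x
            (EuclideanSpace.single a 1) := rfl
    rw [h0, fderiv_clm_apply hdf (differentiableAt_const _)]
    simp
  rw [key, key, hsym.eq]

lemma pder_support_subset {f : EuclideanSpace ℝ (Fin n) → ℝ} (j : Fin n) :
    Function.support (pder n j f) ⊆ tsupport f := by
  intro x hx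
  by_contra hxs
  apply hx
  have h0 : f =ᶠ[𝓝 x] (fun _ => (0:ℝ)) := by
    have : IsOpen (tsupport f)ᶜ := (isClosed_tsupport f).isOpen_compl
    filter_upwards [this.mem_nhds hxs] with y hy
    exact image_eq_zero_of_notMem_tsupport hy
  simp only [pder, h0.fderiv_eq, fderiv_const]
  simp

lemma tsupport_pder_subset {f : EuclideanSpace ℝ (Fin n) → ℝ} (j : Fin n) :
    tsupport (pder n j f) ⊆ tsupport f :=
  closure_minimal (pder_support_subset j) (isClosed_tsupport f)

lemma integral_pder_eq_zero {f : EuclideanSpace ℝ (Fin n) → ℝ}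
    (hf : ContDiff ℝ (⊤ : ℕ∞) f) (hfc : HasCompactSupport f) (j : Fin n) :
    ∫ x, pder n j f x = 0 := by
  have hfc' : HasCompactSupport (pder n j f) :=
    HasCompactSupport.intro hfc (fun x hx => by
      by_contra h0
      exact hx (tsupport_pder_subset j (subset_closure (Function.mem_support.2 h0))))
  have hInt : Integrable (fun x => pder n j f x) :=
    ((hf.pder' j).continuous).integrable_of_hasCompactSupport hfc'
  have hIntf : Integrable f := hf.continuous.integrable_of_hasCompactSupport hfc
  have := integral_mul_fderiv_eq_neg_fderiv_mul_of_integrable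
    (μ := (volume : Measure (EuclideanSpace ℝ (Fin n))))
    (f := f) (g := fun _ => (1:ℝ)) (v := EuclideanSpace.single j 1)
    (by simpa [pder] using hInt.mul_const 1)
    (by simp) (by simpa using hIntf)
    (fun x _ => (hf.differentiable (by simp)) x) (fun x _ => (differentiable_const (1:ℝ)) x)
  simp only [fderiv_fun_const] at this
  simp only [Pi.zero_apply, ContinuousLinearMap.zero_apply, mul_zero, integral_zero] at this
  have h2 : (0:ℝ) = - ∫ x, pder n j f x * 1 := this
  have h3 := neg_eq_zero.1 h2.symm
  simpa using h3

lemma gradient_apply {f : EuclideanSpace ℝ (Fin n) → ℝ} (x : EuclideanSpace ℝ (Fin n)) (j : Fin n) :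
    gradient f x j = pder n j f x := by
  have : (inner ℝ (gradient f x) (EuclideanSpace.single j (1:ℝ)) : ℝ)
      = fderiv ℝ f x (EuclideanSpace.single j 1) :=
    InnerProductSpace.toDual_symm_apply
  rw [EuclideanSpace.inner_single_right] at this
  simpa only [one_mul, conj_trivial, pder] using this

lemma norm_sq_eq (u : EuclideanSpace ℝ (Fin n)) : ‖u‖^2 = ∑ i, (u i)^2 := by
  rw [EuclideanSpace.norm_eq, Real.sq_sqrt (by positivity)]
  simp [sq_abs]

lemma alg (m : ℕ) (a S : ℝ) (p q : Fin m → ℝ) (P Q : Fin m → Fin m → ℝ)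
    (T : Fin m → Fin m → Fin m → ℝ)
    (hS : S = ∑ j, Q j j)
    (hQ : ∀ i j, Q i j = Q j i)
    (hT : ∀ i j, T j i i = T i i j) :
    ∑ j, ((p j * q j + a * Q j j) * S + a * q j * (∑ i, T j i i)
      - (p j * (∑ i, q i * Q j i) + a * (∑ i, (Q j i * Q j i + q i * T j j i)))
      + (P j j * (∑ i, q i * q i) + p j * (∑ i, (Q j i * q i + q i * Q j i)))
      - (Q j j * (∑ i, p i * q i) + q j * (∑ i, (P j i * q i + p i * Q j i))))
    = a * S^2 - (∑ i, ∑ j, P i j * q i * q j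
        - (∑ j, P j j) * (∑ i, q i * q i) + a * (∑ i, ∑ j, Q i j * Q i j)) := by
  simp only [add_mul, mul_add, Finset.sum_add_distrib, Finset.sum_sub_distrib, Finset.mul_sum,
    Finset.sum_mul]
  have B1 : ∑ x, ∑ i, Q x x * (p i * q i) = ∑ x : Fin m, p x * q x * S := by
    rw [Finset.sum_comm]
    refine Finset.sum_congr rfl fun i _ => ?_
    rw [← Finset.sum_mul, ← hS]; ring
  have B2 : ∑ x : Fin m, a * Q x x * S = a * S ^ 2 := by
    rw [show (∑ x : Fin m, a * Q x x * S) = (∑ x, Q x x) * (a * S) from by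
      rw [Finset.sum_mul]; exact Finset.sum_congr rfl fun x _ => by ring, ← hS]
    ring
  have B3 : ∑ x : Fin m, ∑ i, a * q x * T x i i = ∑ x : Fin m, ∑ i, a * (q i * T x x i) := by
    rw [show (∑ x : Fin m, ∑ i, a * q x * T x i i) = ∑ x : Fin m, ∑ i, a * q x * T i i x from
      Finset.sum_congr rfl fun x _ => Finset.sum_congr rfl fun i _ => by rw [hT]]
    rw [Finset.sum_comm]
    exact Finset.sum_congr rfl fun x _ => Finset.sum_congr rfl fun i _ => by ring
  have B4 : ∑ x : Fin m, ∑ i, q x * (p i * Q x i) = ∑ x : Fin m, ∑ i, p x * (q i * Q x i) := by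
    rw [Finset.sum_comm]
    exact Finset.sum_congr rfl fun x _ => Finset.sum_congr rfl fun i _ => by rw [hQ]; ring
  have B5 : ∑ x : Fin m, ∑ i, p x * (Q x i * q i) = ∑ x : Fin m, ∑ i, p x * (q i * Q x i) :=
    Finset.sum_congr rfl fun x _ => Finset.sum_congr rfl fun i _ => by ring
  have B6 : ∑ x : Fin m, ∑ i, q x * (P x i * q i) = ∑ i : Fin m, ∑ j, P i j * q i * q j :=
    Finset.sum_congr rfl fun x _ => Finset.sum_congr rfl fun i _ => by ring
  have B7 : ∑ x : Fin m, ∑ i, P x x * (q i * q i) = ∑ x : Fin m, ∑ i, P i i * (q x * q x) :=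
    Finset.sum_comm ..
  rw [B1, B2, B3, B4, B5, B6, B7]
  ring

/-- The vector field whose divergence realizes the Yano identity. -/
noncomputable def Vf (n : ℕ) (ρ Φ : EuclideanSpace ℝ (Fin n) → ℝ) (j : Fin n)
    (y : EuclideanSpace ℝ (Fin n)) : ℝ :=
  ρ y * pder n j Φ y * lapl n Φ y
    - ρ y * (∑ i, pder n i Φ y * pder n j (pder n i Φ) y)
    + pder n j ρ y * (∑ i, pder n i Φ y * pder n i Φ y)
    - pder n j Φ y * (∑ i, pder n i ρ y * pder n i Φ y)

lemma lapl_eq (f : EuclideanSpace ℝ (Fin n) → ℝ) :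
    lapl n f = fun x => ∑ i, pder n i (pder n i f) x := rfl

lemma contDiff_lapl {f : EuclideanSpace ℝ (Fin n) → ℝ} (hf : ContDiff ℝ (⊤ : ℕ∞) f) :
    ContDiff ℝ (⊤ : ℕ∞) (lapl n f) := by
  rw [lapl_eq]
  exact ContDiff.sum fun i _ => (hf.pder' i).pder' i

section Main

variable {ρ Φ : EuclideanSpace ℝ (Fin n) → ℝ}

lemma contDiff_Vf (hρ : ContDiff ℝ (⊤ : ℕ∞) ρ) (hΦ : ContDiff ℝ (⊤ : ℕ∞) Φ) (j : Fin n) :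
    ContDiff ℝ (⊤ : ℕ∞) (Vf n ρ Φ j) := by
  unfold Vf
  refine ContDiff.sub (ContDiff.add (ContDiff.sub ?_ ?_) ?_) ?_
  · exact (hρ.mul (hΦ.pder' j)).mul (contDiff_lapl hΦ)
  · exact hρ.mul (ContDiff.sum fun i _ => (hΦ.pder' i).mul ((hΦ.pder' i).pder' j))
  · exact (hρ.pder' j).mul (ContDiff.sum fun i _ => (hΦ.pder' i).mul (hΦ.pder' i))
  · exact (hΦ.pder' j).mul (ContDiff.sum fun i _ => (hρ.pder' i).mul (hΦ.pder' i))

/-- Pointwise expansion of the divergence of `Vf`. -/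
lemma pder_Vf (hρ : ContDiff ℝ (⊤ : ℕ∞) ρ) (hΦ : ContDiff ℝ (⊤ : ℕ∞) Φ) (j : Fin n)
    (x : EuclideanSpace ℝ (Fin n)) :
    pder n j (Vf n ρ Φ j) x
      = ((pder n j ρ x * pder n j Φ x + ρ x * pder n j (pder n j Φ) x) * lapl n Φ x
          + ρ x * pder n j Φ x * (∑ i, pder n j (pder n i (pder n i Φ)) x))
        - (pder n j ρ x * (∑ i, pder n i Φ x * pder n j (pder n i Φ) x)
          + ρ x * (∑ i, (pder n j (pder n i Φ) x * pder n j (pder n i Φ) x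
              + pder n i Φ x * pder n j (pder n j (pder n i Φ)) x)))
        + (pder n j (pder n j ρ) x * (∑ i, pder n i Φ x * pder n i Φ x)
          + pder n j ρ x * (∑ i, (pder n j (pder n i Φ) x * pder n i Φ x
              + pder n i Φ x * pder n j (pder n i Φ) x)))
        - (pder n j (pder n j Φ) x * (∑ i, pder n i ρ x * pder n i Φ x)
          + pder n j Φ x * (∑ i, (pder n j (pder n i ρ) x * pder n i Φ x
              + pder n i ρ x * pder n j (pder n i Φ) x))) := by
  have c1 : ContDiff ℝ (⊤:ℕ∞) (fun y => ρ y * pder n j Φ y * lapl n Φ y) :=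
    (hρ.mul (hΦ.pder' j)).mul (contDiff_lapl hΦ)
  have c2 : ContDiff ℝ (⊤:ℕ∞) (fun y => ρ y * (∑ i, pder n i Φ y * pder n j (pder n i Φ) y)) :=
    hρ.mul (ContDiff.sum fun i _ => (hΦ.pder' i).mul ((hΦ.pder' i).pder' j))
  have c3 : ContDiff ℝ (⊤:ℕ∞) (fun y => pder n j ρ y * (∑ i, pder n i Φ y * pder n i Φ y)) :=
    (hρ.pder' j).mul (ContDiff.sum fun i _ => (hΦ.pder' i).mul (hΦ.pder' i))
  have c4 : ContDiff ℝ (⊤:ℕ∞) (fun y => pder n j Φ y * (∑ i, pder n i ρ y * pder n i Φ y)) :=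
    (hΦ.pder' j).mul (ContDiff.sum fun i _ => (hρ.pder' i).mul (hΦ.pder' i))
  have e0 : pder n j (Vf n ρ Φ j) x
      = pder n j (fun y => ρ y * pder n j Φ y * lapl n Φ y) x
        - pder n j (fun y => ρ y * (∑ i, pder n i Φ y * pder n j (pder n i Φ) y)) x
        + pder n j (fun y => pder n j ρ y * (∑ i, pder n i Φ y * pder n i Φ y)) x
        - pder n j (fun y => pder n j Φ y * (∑ i, pder n i ρ y * pder n i Φ y)) x := by
    have h1 := pder_sub (x := x) (((c1.sub c2).add c3).pdiff) c4.pdiff j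
    have h2 := pder_add (x := x) ((c1.sub c2).pdiff) c3.pdiff j
    have h3 := pder_sub (x := x) (c1.pdiff) c2.pdiff j
    unfold Vf
    rw [show (fun y => ρ y * pder n j Φ y * lapl n Φ y
        - ρ y * (∑ i, pder n i Φ y * pder n j (pder n i Φ) y)
        + pder n j ρ y * (∑ i, pder n i Φ y * pder n i Φ y)
        - pder n j Φ y * (∑ i, pder n i ρ y * pder n i Φ y))
      = (fun y => (ρ y * pder n j Φ y * lapl n Φ y
        - ρ y * (∑ i, pder n i Φ y * pder n j (pder n i Φ) y)
        + pder n j ρ y * (∑ i, pder n i Φ y * pder n i Φ y))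
        - pder n j Φ y * (∑ i, pder n i ρ y * pder n i Φ y)) from rfl]
    rw [h1, h2, h3]
  rw [e0]
  congr 1
  congr 1
  congr 1
  -- term 1
  · have e1 : pder n j (fun y => ρ y * pder n j Φ y * lapl n Φ y) x
        = pder n j (fun y => ρ y * pder n j Φ y) x * lapl n Φ x
          + ρ x * pder n j Φ x * pder n j (lapl n Φ) x :=
      pder_mul (hρ.mul (hΦ.pder' j)).pdiff (contDiff_lapl hΦ).pdiff j
    have e2 : pder n j (fun y => ρ y * pder n j Φ y) x
        = pder n j ρ x * pder n j Φ x + ρ x * pder n j (pder n j Φ) x :=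
      pder_mul hρ.pdiff (hΦ.pder' j).pdiff j
    have e3 : pder n j (lapl n Φ) x = ∑ i, pder n j (pder n i (pder n i Φ)) x :=
      pder_sum Finset.univ (fun i _ => ((hΦ.pder' i).pder' i).pdiff) j
    rw [e1, e2, e3]
  -- term 2
  · have e1 : pder n j (fun y => ρ y * (∑ i, pder n i Φ y * pder n j (pder n i Φ) y)) x
        = pder n j ρ x * (∑ i, pder n i Φ x * pder n j (pder n i Φ) x)
          + ρ x * pder n j (fun y => ∑ i, pder n i Φ y * pder n j (pder n i Φ) y) x :=
      pder_mul hρ.pdiff (ContDiff.sum fun i _ =>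
        ((hΦ.pder' i).mul ((hΦ.pder' i).pder' j))).pdiff j
    have e2 : pder n j (fun y => ∑ i, pder n i Φ y * pder n j (pder n i Φ) y) x
        = ∑ i, pder n j (fun y => pder n i Φ y * pder n j (pder n i Φ) y) x :=
      pder_sum Finset.univ (fun i _ => ((hΦ.pder' i).mul ((hΦ.pder' i).pder' j)).pdiff) j
    rw [e1, e2]
    congr 1
    congr 1
    exact Finset.sum_congr rfl fun i _ =>
      pder_mul (hΦ.pder' i).pdiff ((hΦ.pder' i).pder' j).pdiff j
  -- term 3
  · have e1 : pder n j (fun y => pder n j ρ y * (∑ i, pder n i Φ y * pder n i Φ y)) x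
        = pder n j (pder n j ρ) x * (∑ i, pder n i Φ x * pder n i Φ x)
          + pder n j ρ x * pder n j (fun y => ∑ i, pder n i Φ y * pder n i Φ y) x :=
      pder_mul (hρ.pder' j).pdiff (ContDiff.sum fun i _ =>
        ((hΦ.pder' i).mul (hΦ.pder' i))).pdiff j
    have e2 : pder n j (fun y => ∑ i, pder n i Φ y * pder n i Φ y) x
        = ∑ i, pder n j (fun y => pder n i Φ y * pder n i Φ y) x :=
      pder_sum Finset.univ (fun i _ => ((hΦ.pder' i).mul (hΦ.pder' i)).pdiff) j
    rw [e1, e2]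
    congr 1
    congr 1
    exact Finset.sum_congr rfl fun i _ =>
      pder_mul (hΦ.pder' i).pdiff (hΦ.pder' i).pdiff j
  -- term 4
  · have e1 : pder n j (fun y => pder n j Φ y * (∑ i, pder n i ρ y * pder n i Φ y)) x
        = pder n j (pder n j Φ) x * (∑ i, pder n i ρ x * pder n i Φ x)
          + pder n j Φ x * pder n j (fun y => ∑ i, pder n i ρ y * pder n i Φ y) x :=
      pder_mul (hΦ.pder' j).pdiff (ContDiff.sum fun i _ =>
        ((hρ.pder' i).mul (hΦ.pder' i))).pdiff j
    have e2 : pder n j (fun y => ∑ i, pder n i ρ y * pder n i Φ y) x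
        = ∑ i, pder n j (fun y => pder n i ρ y * pder n i Φ y) x :=
      pder_sum Finset.univ (fun i _ => ((hρ.pder' i).mul (hΦ.pder' i)).pdiff) j
    rw [e1, e2]
    congr 1
    congr 1
    exact Finset.sum_congr rfl fun i _ =>
      pder_mul (hρ.pder' i).pdiff (hΦ.pder' i).pdiff j

lemma div_Vf_eq (hρ : ContDiff ℝ (⊤ : ℕ∞) ρ) (hΦ : ContDiff ℝ (⊤ : ℕ∞) Φ)
    (x : EuclideanSpace ℝ (Fin n)) :
    ∑ j, pder n j (Vf n ρ Φ j) x
      = ρ x * (lapl n Φ x)^2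
        - ((∑ i, ∑ j, pder n i (pder n j ρ) x * pder n i Φ x * pder n j Φ x)
          - lapl n ρ x * (∑ i, pder n i Φ x * pder n i Φ x)
          + ρ x * (∑ i, ∑ j, pder n i (pder n j Φ) x * pder n i (pder n j Φ) x)) := by
  rw [Finset.sum_congr rfl (fun j _ => pder_Vf hρ hΦ j x)]
  have hT : ∀ i j : Fin n, pder n j (pder n i (pder n i Φ)) x
      = pder n i (pder n i (pder n j Φ)) x := by
    intro i j
    rw [pder_comm (hΦ.pder' i) j i x]
    have hfun : pder n j (pder n i Φ) = pder n i (pder n j Φ) :=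
      funext (fun y => pder_comm hΦ j i y)
    rw [hfun]
  exact alg n (ρ x) (lapl n Φ x)
    (fun j => pder n j ρ x) (fun j => pder n j Φ x)
    (fun j i => pder n j (pder n i ρ) x) (fun j i => pder n j (pder n i Φ) x)
    (fun j i k => pder n j (pder n i (pder n k Φ)) x)
    rfl (fun i j => pder_comm hΦ i j x) (fun i j => hT i j)

lemma pderΦ_zero (j : Fin n) {x : EuclideanSpace ℝ (Fin n)} (hx : x ∉ tsupport Φ) :
    pder n j Φ x = 0 := by
  by_contra h
  exact hx (pder_support_subset j (Function.mem_support.mpr h))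

lemma pder2Φ_zero (i j : Fin n) {x : EuclideanSpace ℝ (Fin n)} (hx : x ∉ tsupport Φ) :
    pder n i (pder n j Φ) x = 0 := by
  by_contra h
  exact hx (tsupport_pder_subset j (pder_support_subset i (Function.mem_support.mpr h)))

lemma Vf_compactSupport (hΦc : HasCompactSupport Φ) (j : Fin n) :
    HasCompactSupport (Vf n ρ Φ j) :=
  HasCompactSupport.intro hΦc fun x hx => by
    simp [Vf, pderΦ_zero (Φ := Φ) _ hx]

/-- The key integral identity. -/
lemma key (hρ : ContDiff ℝ (⊤ : ℕ∞) ρ) (hΦ : ContDiff ℝ (⊤ : ℕ∞) Φ)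
    (hΦc : HasCompactSupport Φ) :
    ∫ x, ρ x * (lapl n Φ x)^2
      = ∫ x, (hessQF n ρ x (gradient Φ x)
          - lapl n ρ x * ‖gradient Φ x‖^2 + ρ x * hessFrob n Φ x) := by
  have hg : ∀ (x : EuclideanSpace ℝ (Fin n)) (i : Fin n), gradient Φ x i = pder n i Φ x :=
    fun x i => gradient_apply x i
  have hRrep : ∀ x, hessQF n ρ x (gradient Φ x)
      - lapl n ρ x * ‖gradient Φ x‖^2 + ρ x * hessFrob n Φ x
      = (∑ i, ∑ j, pder n i (pder n j ρ) x * pder n i Φ x * pder n j Φ x)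
        - lapl n ρ x * (∑ i, pder n i Φ x * pder n i Φ x)
        + ρ x * (∑ i, ∑ j, pder n i (pder n j Φ) x * pder n i (pder n j Φ) x) := by
    intro x
    have h1 : hessQF n ρ x (gradient Φ x)
        = ∑ i, ∑ j, pder n i (pder n j ρ) x * pder n i Φ x * pder n j Φ x :=
      Finset.sum_congr rfl fun i _ => Finset.sum_congr rfl fun j _ => by
        rw [hg x i, hg x j]; rfl
    have h2 : ‖gradient Φ x‖^2 = ∑ i, pder n i Φ x * pder n i Φ x := by
      rw [norm_sq_eq]
      exact Finset.sum_congr rfl fun i _ => by rw [hg x i, pow_two]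
    have h3 : hessFrob n Φ x
        = ∑ i, ∑ j, pder n i (pder n j Φ) x * pder n i (pder n j Φ) x :=
      Finset.sum_congr rfl fun i _ => Finset.sum_congr rfl fun j _ => by
        rw [pow_two]; rfl
    rw [h1, h2, h3]
  rw [show (fun x => hessQF n ρ x (gradient Φ x)
      - lapl n ρ x * ‖gradient Φ x‖^2 + ρ x * hessFrob n Φ x)
      = (fun x => (∑ i, ∑ j, pder n i (pder n j ρ) x * pder n i Φ x * pder n j Φ x)
        - lapl n ρ x * (∑ i, pder n i Φ x * pder n i Φ x)
        + ρ x * (∑ i, ∑ j, pder n i (pder n j Φ) x * pder n i (pder n j Φ) x))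
      from funext hRrep]
  -- integrability of both sides
  have hLc : Continuous (fun x => ρ x * (lapl n Φ x)^2) :=
    hρ.continuous.mul ((contDiff_lapl hΦ).continuous.pow 2)
  have hRc : Continuous (fun x =>
      (∑ i, ∑ j, pder n i (pder n j ρ) x * pder n i Φ x * pder n j Φ x)
        - lapl n ρ x * (∑ i, pder n i Φ x * pder n i Φ x)
        + ρ x * (∑ i, ∑ j, pder n i (pder n j Φ) x * pder n i (pder n j Φ) x)) := by
    refine Continuous.add (Continuous.sub ?_ (Continuous.mul (contDiff_lapl hρ).continuous ?_))
      (Continuous.mul hρ.continuous ?_)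
    · exact continuous_finset_sum _ fun i _ => continuous_finset_sum _ fun j _ =>
        ((((hρ.pder' j).pder' i).continuous.mul (hΦ.pder' i).continuous).mul
          (hΦ.pder' j).continuous)
    · exact continuous_finset_sum _ fun i _ =>
        (hΦ.pder' i).continuous.mul (hΦ.pder' i).continuous
    · exact continuous_finset_sum _ fun i _ => continuous_finset_sum _ fun j _ =>
        ((hΦ.pder' j).pder' i).continuous.mul ((hΦ.pder' j).pder' i).continuous
  have hLcs : HasCompactSupport (fun x => ρ x * (lapl n Φ x)^2) :=
    HasCompactSupport.intro hΦc fun x hx => by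
      have : lapl n Φ x = 0 := by
        rw [lapl_eq]
        exact Finset.sum_eq_zero fun i _ => pder2Φ_zero i i hx
      simp [this]
  have hRcs : HasCompactSupport (fun x =>
      (∑ i, ∑ j, pder n i (pder n j ρ) x * pder n i Φ x * pder n j Φ x)
        - lapl n ρ x * (∑ i, pder n i Φ x * pder n i Φ x)
        + ρ x * (∑ i, ∑ j, pder n i (pder n j Φ) x * pder n i (pder n j Φ) x)) :=
    HasCompactSupport.intro hΦc fun x hx => by
      simp [pderΦ_zero (Φ := Φ) _ hx, pder2Φ_zero (Φ := Φ) _ _ hx]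
  have hLint : Integrable (fun x => ρ x * (lapl n Φ x)^2) :=
    hLc.integrable_of_hasCompactSupport hLcs
  have hRint : Integrable (fun x =>
      (∑ i, ∑ j, pder n i (pder n j ρ) x * pder n i Φ x * pder n j Φ x)
        - lapl n ρ x * (∑ i, pder n i Φ x * pder n i Φ x)
        + ρ x * (∑ i, ∑ j, pder n i (pder n j Φ) x * pder n i (pder n j Φ) x)) :=
    hRc.integrable_of_hasCompactSupport hRcs
  have hVsupp : ∀ j : Fin n, tsupport (Vf n ρ Φ j) ⊆ tsupport Φ := fun j =>
    closure_minimal (fun x hx => by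
      by_contra hxn
      exact hx (by simp [Vf, pderΦ_zero (Φ := Φ) _ hxn])) (isClosed_tsupport Φ)
  have hVint : ∀ j : Fin n, Integrable (fun x => pder n j (Vf n ρ Φ j) x) := by
    intro j
    refine ((contDiff_Vf hρ hΦ j).pder' j).continuous.integrable_of_hasCompactSupport ?_
    exact HasCompactSupport.intro hΦc fun x hx => by
      by_contra h
      exact hx (hVsupp j (tsupport_pder_subset (f := Vf n ρ Φ j) j
        (subset_closure (Function.mem_support.mpr h))))
  have h0 : ∫ x, (ρ x * (lapl n Φ x)^2 - ((∑ i, ∑ j, pder n i (pder n j ρ) x * pder n i Φ x * pder n j Φ x)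
        - lapl n ρ x * (∑ i, pder n i Φ x * pder n i Φ x)
        + ρ x * (∑ i, ∑ j, pder n i (pder n j Φ) x * pder n i (pder n j Φ) x))) = 0 := by
    rw [show (fun x => ρ x * (lapl n Φ x)^2 - ((∑ i, ∑ j, pder n i (pder n j ρ) x * pder n i Φ x * pder n j Φ x)
        - lapl n ρ x * (∑ i, pder n i Φ x * pder n i Φ x)
        + ρ x * (∑ i, ∑ j, pder n i (pder n j Φ) x * pder n i (pder n j Φ) x)))
        = fun x => ∑ j, pder n j (Vf n ρ Φ j) x from funext fun x => (div_Vf_eq hρ hΦ x).symm]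
    rw [integral_finset_sum _ (fun j _ => hVint j)]
    exact Finset.sum_eq_zero fun j _ =>
      integral_pder_eq_zero (contDiff_Vf hρ hΦ j) (Vf_compactSupport hΦc j) j
  rw [integral_sub hLint hRint] at h0
  linarith

end Main

end Helpers

/-- generalized Yano formula for `γ = 0` on flat space:
`∫ μ⁻¹(ΔΦ)² dx = ∫ { Hess(μ⁻¹)(∇Φ,∇Φ) − Δ(μ⁻¹)‖∇Φ‖² + μ⁻¹‖Hess Φ‖² } dx`. -/
theorem stmt6 (n : ℕ) (hn : 1 ≤ n)
    (μ : EuclideanSpace ℝ (Fin n) → ℝ) (hμ : ContDiff ℝ (⊤ : ℕ∞) μ)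
    (hμpos : ∀ x, 0 < μ x)
    (Φ : EuclideanSpace ℝ (Fin n) → ℝ) (hΦ : ContDiff ℝ (⊤ : ℕ∞) Φ)
    (hΦc : HasCompactSupport Φ) :
    ∫ x, (μ x)⁻¹ * (lapl n Φ x)^2
      = ∫ x, (hessQF n (fun y => (μ y)⁻¹) x (gradient Φ x)
          - lapl n (fun y => (μ y)⁻¹) x * ‖gradient Φ x‖^2
          + (μ x)⁻¹ * hessFrob n Φ x) := by
  exact key (hμ.inv fun x => (hμpos x).ne') hΦ hΦc
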